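/- arXiv:1411.4136 — 7 statements merged into one kernel-verified Lean document; each statement's English description precedes it below -/
import Mathlib

section
/- Let c > 0. The set D1 of real symmetric 2×2 matrices V such that Tr(XV) ≥ 2c·√(det X) for all positive definite 2×2 matrices X equals the set D2 of positive definite symmetric 2×2 matrices V with det V ≥ c². -/
open Matrix

lemma posDef_fin_two {x y z : ℝ} (hx : 0 < x) (hD : y * y < x * z) :
    (!![x, y; y, z] : Matrix (Fin 2) (Fin 2) ℝ).PosDef := by
  rw [Matrix.posDef_iff_dotProduct_mulVec]
  constructor
  · ext i j
    fin_cases i <;> fin_cases j <;> simp [Matrix.conjTranspose_apply]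
  · intro v hv
    have h0 : star v ⬝ᵥ (!![x, y; y, z] : Matrix (Fin 2) (Fin 2) ℝ) *ᵥ v =
        v 0 * (x * v 0 + y * v 1) + v 1 * (y * v 0 + z * v 1) := by
      simp [dotProduct, Matrix.mulVec, Fin.sum_univ_two, dotProduct]
    rw [h0]
    rcases eq_or_ne (v 1) 0 with h1 | h1
    · have h2 : v 0 ≠ 0 := by
        intro h2; apply hv; ext i; fin_cases i <;> simp [h1, h2]
      rw [h1]
      nlinarith [mul_pos hx (mul_self_pos.mpr h2)]
    · nlinarith [sq_nonneg (x * v 0 + y * v 1), mul_pos (mul_self_pos.mpr h1) (sub_pos.mpr hD),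
        mul_self_pos.mpr h1]

lemma entry00_pos {X : Matrix (Fin 2) (Fin 2) ℝ} (hX : X.PosDef) : 0 < X 0 0 := by
  have := (posDef_iff_dotProduct_mulVec.mp hX).2 (x := (Pi.single 0 1 : Fin 2 → ℝ)) (by simp [Function.ne_iff])
  simpa [dotProduct, Matrix.mulVec, Fin.sum_univ_two, Pi.single_apply] using this

lemma entry11_pos {X : Matrix (Fin 2) (Fin 2) ℝ} (hX : X.PosDef) : 0 < X 1 1 := by
  have := (posDef_iff_dotProduct_mulVec.mp hX).2 (x := (Pi.single 1 1 : Fin 2 → ℝ)) (by simp [Function.ne_iff])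
  simpa [dotProduct, Matrix.mulVec, Fin.sum_univ_two, Pi.single_apply] using this

lemma sym_entry {X : Matrix (Fin 2) (Fin 2) ℝ} (hX : X.IsHermitian) : X 1 0 = X 0 1 := by
  have := congrFun (congrFun hX.symm 1) 0
  simpa [Matrix.conjTranspose_apply] using this

lemma trace_mul_ent (X V : Matrix (Fin 2) (Fin 2) ℝ) :
    (X * V).trace = X 0 0 * V 0 0 + X 0 1 * V 1 0 + X 1 0 * V 0 1 + X 1 1 * V 1 1 := by
  simp [Matrix.trace_fin_two, Matrix.mul_apply, Fin.sum_univ_two]; ring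

lemma trace_test (x y z : ℝ) (V : Matrix (Fin 2) (Fin 2) ℝ) :
    ((!![x, y; y, z] : Matrix (Fin 2) (Fin 2) ℝ) * V).trace =
      x * V 0 0 + y * V 1 0 + y * V 0 1 + z * V 1 1 := by
  rw [trace_mul_ent]
  norm_num

lemma det_ent (x y z : ℝ) : (!![x,y;y,z] : Matrix (Fin 2) (Fin 2) ℝ).det = x*z - y*y := by
  simp [Matrix.det_fin_two]

set_option maxHeartbeats 1600000 in
/-- For `c > 0`, the set of real symmetric 2×2 matrices `V` with
`Tr(XV) ≥ 2c√(det X)` for all symmetric positive definite `X` equals the set of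
symmetric positive definite `V` with `det V ≥ c²`. -/
theorem stmt0 (c : ℝ) (hc : 0 < c) :
    {V : Matrix (Fin 2) (Fin 2) ℝ | V.IsHermitian ∧
      ∀ X : Matrix (Fin 2) (Fin 2) ℝ, X.PosDef →
        2 * c * Real.sqrt X.det ≤ (X * V).trace} =
    {V : Matrix (Fin 2) (Fin 2) ℝ | V.PosDef ∧ c ^ 2 ≤ V.det} := by
  ext V
  simp only [Set.mem_setOf_eq]
  constructor
  · rintro ⟨hH, hIneq⟩
    have hba0 : V 1 0 = V 0 1 := sym_entry hH
    set a := V 0 0 with ha_def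
    set b := V 0 1 with hb_def
    set d := V 1 1 with hd_def
    have hba : V 1 0 = b := hba0
    clear_value a b d
    -- basic inequality from diagonal test matrices
    have key0 : ∀ t : ℝ, 0 < t → 2*c*t ≤ t*t*a + d := by
      intro t ht
      have h1 : t*(1/t) = 1 := by field_simp
      have hP : (!![t, 0; 0, 1/t] : Matrix (Fin 2) (Fin 2) ℝ).PosDef :=
        posDef_fin_two ht (by rw [h1]; norm_num)
      have h2 := hIneq _ hP
      rw [trace_test, det_ent] at h2
      have h3 : (t*(1/t) - 0*0 : ℝ) = 1 := by rw [h1]; ring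
      rw [h3, Real.sqrt_one, mul_one, hba, ← ha_def, ← hb_def, ← hd_def] at h2
      have h4 := mul_le_mul_of_nonneg_right h2 ht.le
      have h5 : (t*a + 0*b + 0*b + 1/t*d)*t = t*t*a + d := by field_simp; ring
      linarith [h4, h5]
    have ha : 0 < a := by
      by_contra hcon
      push_neg at hcon
      rcases le_or_gt d 0 with hd0 | hd0
      · have := key0 1 one_pos; nlinarith
      · have hk := key0 (d/c) (by positivity)
        have e1 : 2*c*(d/c) = 2*d := by field_simp
        have e2 : (d/c)*(d/c)*a = d*d*a/(c*c) := by ring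
        have e3 : d*d*a ≤ 0 := by nlinarith
        have e4 : d*d*a/(c*c) ≤ 0 := div_nonpos_of_nonpos_of_nonneg e3 (by positivity)
        nlinarith [hk, e1, e2, e4]
    have hd : 0 < d := by
      have hk := key0 (c/a) (by positivity)
      have e2 : (c/a)*(c/a)*a = c*c/a := by field_simp
      have e1 : 2*c*(c/a) = c*c/a + c*c/a := by field_simp; ring
      have e3 : 0 < c*c/a := by positivity
      linarith [hk, e1, e2, e3]
    -- det inequality from a well-chosen test matrix
    have hy : (-b/c)*c = -b := by field_simp
    set y0 := -b/c with hy0_def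
    clear_value y0
    have hy1 : 0 < y0*y0 + 1 := by nlinarith [mul_self_nonneg y0]
    have harg : 0 < d*(y0*y0+1)/a := div_pos (by nlinarith) ha
    set s := Real.sqrt (d*(y0*y0+1)/a) with hs_def
    have hs : 0 < s := Real.sqrt_pos.mpr harg
    have hss : s*s = d*(y0*y0+1)/a := Real.mul_self_sqrt harg.le
    clear_value s
    have e4 : s*s*a = d*(y0*y0+1) := by rw [hss]; field_simp
    have hzz : s*((y0*y0+1)/s) = y0*y0+1 := by field_simp
    have hP : (!![s, y0; y0, (y0*y0+1)/s] : Matrix (Fin 2) (Fin 2) ℝ).PosDef :=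
      posDef_fin_two hs (by rw [hzz]; linarith)
    have h2 := hIneq _ hP
    rw [trace_test, det_ent] at h2
    have h3 : s*((y0*y0+1)/s) - y0*y0 = 1 := by rw [hzz]; ring
    rw [h3, Real.sqrt_one, mul_one, hba, ← ha_def, ← hb_def, ← hd_def] at h2
    have h4 := mul_le_mul_of_nonneg_right h2 hs.le
    have h5 : (s*a + y0*b + y0*b + (y0*y0+1)/s*d)*s = s*s*a + 2*y0*b*s + (y0*y0+1)*d := by
      field_simp; ring
    have h6 : s*(c - y0*b) ≤ d*(y0*y0+1) := by linarith [h4, h5, e4]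
    have e5 : c*c*(c - y0*b) = c*(c*c + b*b) := by linear_combination (-(b*c))*hy
    have e6 : c*c*(y0*y0+1) = b*b + c*c := by linear_combination (y0*c - b)*hy
    have h7 := mul_le_mul_of_nonneg_left h6 (mul_pos hc hc).le
    have e5s : s*(c*c*(c - y0*b)) = s*(c*(c*c + b*b)) := by rw [e5]
    have e6s : c*c*(d*(y0*y0+1)) = d*(b*b + c*c) := by linear_combination d*e6
    have h7a : s*(c*(c*c+b*b)) ≤ d*(b*b+c*c) := by linarith [h7, e5s, e6s]
    have hsc : s*c ≤ d := by
      nlinarith [h7a, add_pos_of_pos_of_nonneg (mul_pos hc hc) (mul_self_nonneg b)]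
    have h8 := mul_le_mul_of_nonneg_left (mul_self_le_mul_self (by positivity) hsc) ha.le
    have h9 : a*(s*c*(s*c)) = d*(b*b + c*c) := by linear_combination (c*c)*e4 + d*e6
    have h10 : d*(b*b+c*c) ≤ a*(d*d) := by linarith [h8, h9]
    have h11 : b*b + c*c ≤ a*d := by nlinarith [h10, hd]
    have hdetV : c^2 ≤ a*d - b*b := by nlinarith [h11]
    have hVeq : V = !![a, b; b, d] := by
      have hV2 := Matrix.eta_fin_two V
      rw [hba, ← ha_def, ← hb_def, ← hd_def] at hV2
      exact hV2
    constructor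
    · rw [hVeq]
      exact posDef_fin_two ha (by nlinarith [pow_pos hc 2])
    · rw [Matrix.det_fin_two, hba, ← ha_def, ← hb_def, ← hd_def]
      linarith [hdetV]
  · rintro ⟨hV, hdet⟩
    refine ⟨hV.1, fun X hX => ?_⟩
    have hba : V 1 0 = V 0 1 := sym_entry hV.1
    have hyx : X 1 0 = X 0 1 := sym_entry hX.1
    have ha : 0 < V 0 0 := entry00_pos hV
    have hd : 0 < V 1 1 := entry11_pos hV
    have hx : 0 < X 0 0 := entry00_pos hX
    have hz : 0 < X 1 1 := entry11_pos hX
    have hXdet : X.det = X 0 0 * X 1 1 - X 0 1 * X 0 1 := by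
      rw [Matrix.det_fin_two, hyx]
    have hDx : 0 < X 0 0 * X 1 1 - X 0 1 * X 0 1 := by rw [← hXdet]; exact hX.det_pos
    have hdV : c^2 ≤ V 0 0 * V 1 1 - V 0 1 * V 0 1 := by
      rw [Matrix.det_fin_two, hba] at hdet; linarith
    rw [trace_mul_ent, hba, hyx, hXdet]
    set a := V 0 0 with ha_def
    set b := V 0 1 with hb_def
    set d := V 1 1 with hd_def
    set x := X 0 0 with hx_def
    set y := X 0 1 with hy_def
    set z := X 1 1 with hz_def
    clear_value a b d x y z
    -- goal : 2*c*√(x*z - y*y) ≤ x*a + y*b + y*b + z*d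
    have hb2 : b*b < a*d := by nlinarith [pow_pos hc 2]
    have hS : 0 < x*a + y*b + y*b + z*d := by
      nlinarith [sq_nonneg (a*x + 2*b*y + d*z), sq_nonneg (a*x - d*z),
        mul_nonneg (sq_nonneg b) hDx.le,
        mul_pos (sub_pos.mpr hb2) (mul_pos hx hz),
        add_pos (mul_pos ha hx) (mul_pos hd hz)]
    have hid : x^2*((x*a + y*b + y*b + z*d)^2 - 4*(a*d-b*b)*(x*z-y*y)) =
        (a*x^2+2*b*x*y+2*d*y^2-d*x*z)^2 + 4*(x*z-y*y)*(b*x+d*y)^2 := by ring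
    have hK : 4*c^2*(x*z - y*y) ≤ (x*a + y*b + y*b + z*d)^2 := by
      have hK0 : 4*(a*d-b*b)*(x*z-y*y) ≤ (x*a + y*b + y*b + z*d)^2 := by
        nlinarith [hid, mul_pos hx hx, sq_nonneg (a*x^2+2*b*x*y+2*d*y^2-d*x*z),
          mul_nonneg hDx.le (sq_nonneg (b*x+d*y))]
      nlinarith [mul_nonneg (sub_nonneg.mpr hdV) hDx.le]
    calc 2*c*Real.sqrt (x*z - y*y) = Real.sqrt (4*c^2*(x*z - y*y)) := by
          rw [show (4*c^2*(x*z - y*y) : ℝ) = (2*c)^2 * (x*z - y*y) by ring,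
            Real.sqrt_mul (by positivity), Real.sqrt_sq (by positivity)]
      _ ≤ Real.sqrt ((x*a + y*b + y*b + z*d)^2) := Real.sqrt_le_sqrt hK
      _ = x*a + y*b + y*b + z*d := Real.sqrt_sq hS.le
end

section
/- For 2×2 real symmetric positive definite matrices A and W, (Tr√(√A W √A))² = Tr(W A) + 2√(det(W A)). In particular, the Nagaoka bound C^N[W] = (F(G⁻¹, W))² equals Tr(W G⁻¹) + 2√(det(W G⁻¹)) where F(A,B) = Tr√(√A B √A). -/
open Matrix

section
open scoped ComplexOrder
noncomputable def Matrix.PosSemidef.sqrt {𝕜 : Type*} [RCLike 𝕜] {n : Type*} [Fintype n]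
    [DecidableEq n] {A : Matrix n n 𝕜} (hA : A.PosSemidef) : Matrix n n 𝕜 :=
  hA.1.eigenvectorUnitary.1 * diagonal ((↑) ∘ (√·) ∘ hA.1.eigenvalues) *
    (star hA.1.eigenvectorUnitary : Matrix n n 𝕜)
end

section
open scoped ComplexOrder
lemma Matrix.PosSemidef.sqrt_mul_self {𝕜 : Type*} [RCLike 𝕜] {n : Type*} [Fintype n]
    [DecidableEq n] {A : Matrix n n 𝕜} (hA : A.PosSemidef) : hA.sqrt * hA.sqrt = A := by
  have hD : diagonal ((↑) ∘ (√·) ∘ hA.1.eigenvalues) * diagonal ((↑) ∘ (√·) ∘ hA.1.eigenvalues)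
      = diagonal (RCLike.ofReal ∘ hA.1.eigenvalues : n → 𝕜) := by
    rw [diagonal_mul_diagonal]
    congr 1; funext i
    simp only [Function.comp_apply]
    rw [← RCLike.ofReal_mul, Real.mul_self_sqrt (hA.eigenvalues_nonneg i)]
  have hU : (star hA.1.eigenvectorUnitary : Matrix n n 𝕜) * hA.1.eigenvectorUnitary.1 = 1 :=
    Unitary.coe_star_mul_self _
  conv_rhs => rw [hA.1.spectral_theorem]
  simp only [Matrix.PosSemidef.sqrt, Unitary.conjStarAlgAut_apply]
  calc _ = hA.1.eigenvectorUnitary.1 * (diagonal ((↑) ∘ (√·) ∘ hA.1.eigenvalues) *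
        ((star hA.1.eigenvectorUnitary : Matrix n n 𝕜) * hA.1.eigenvectorUnitary.1) *
        diagonal ((↑) ∘ (√·) ∘ hA.1.eigenvalues)) *
        (star hA.1.eigenvectorUnitary : Matrix n n 𝕜) := by simp only [Matrix.mul_assoc]
    _ = _ := by rw [hU, Matrix.mul_one, hD]

lemma Matrix.PosSemidef.posSemidef_sqrt {𝕜 : Type*} [RCLike 𝕜] {n : Type*} [Fintype n]
    [DecidableEq n] {A : Matrix n n 𝕜} (hA : A.PosSemidef) : hA.sqrt.PosSemidef := by
  have := (posSemidef_diagonal_iff.mpr (fun i => (by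
      simp only [Function.comp_apply, RCLike.ofReal_nonneg]; exact Real.sqrt_nonneg _) :
      ∀ i, (0:𝕜) ≤ ((↑) ∘ (√·) ∘ hA.1.eigenvalues) i)).conjTranspose_mul_mul_same
      (star hA.1.eigenvectorUnitary : Matrix n n 𝕜)
  simpa [Matrix.PosSemidef.sqrt, star_eq_conjTranspose] using this
end

lemma trace_sq_fin_two (S : Matrix (Fin 2) (Fin 2) ℝ) :
    S.trace ^ 2 = (S * S).trace + 2 * S.det := by
  simp [Matrix.trace_fin_two, Matrix.det_fin_two, Matrix.mul_apply, Fin.sum_univ_two]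
  ring

/-- For 2×2 real symmetric positive definite `A`, `W`,
`(Tr √(√A W √A))² = Tr(W A) + 2√(det(W A))` (the Nagaoka bound equals
`Tr(W G⁻¹) + 2√det(W G⁻¹)` taking `A = G⁻¹`). -/
theorem stmt5 (A W : Matrix (Fin 2) (Fin 2) ℝ) (hA : A.PosDef) (hW : W.PosDef)
    (hM : (hA.posSemidef.sqrt * W * hA.posSemidef.sqrt).PosSemidef) :
    hM.sqrt.trace ^ 2 = (W * A).trace + 2 * Real.sqrt (W * A).det := by
  have hS := hM.sqrt_mul_self
  have htr : (hM.sqrt * hM.sqrt).trace = (W * A).trace := by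
    rw [hS, Matrix.trace_mul_cycle, hA.posSemidef.sqrt_mul_self,
      Matrix.trace_mul_comm]
  have hdet : (W * A).det = hM.sqrt.det ^ 2 := by
    have : (hM.sqrt * hM.sqrt).det = hM.sqrt.det ^ 2 := by
      rw [Matrix.det_mul]; ring
    have hAd : hA.posSemidef.sqrt.det * hA.posSemidef.sqrt.det = A.det := by
      rw [← Matrix.det_mul, hA.posSemidef.sqrt_mul_self]
    rw [← this, hS, Matrix.det_mul, Matrix.det_mul, Matrix.det_mul, ← hAd]
    ring
  have hnn : 0 ≤ hM.sqrt.det := by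
    have h2 := hM.posSemidef_sqrt.sqrt_mul_self
    calc (0:ℝ) ≤ hM.posSemidef_sqrt.sqrt.det ^ 2 := sq_nonneg _
    _ = hM.sqrt.det := by rw [sq, ← Matrix.det_mul, h2]
  rw [trace_sq_fin_two, htr, hdet, Real.sqrt_sq hnn]
end

section
/- Let G⁻¹ be a 2×2 real symmetric positive definite matrix. The following three sets of 2×2 real symmetric matrices are equal: D_N = {V : Tr(WV) ≥ Tr(W G⁻¹) + 2√(det(W G⁻¹)) for all W > 0}, D_GM = {V : V > G⁻¹ and Tr(G⁻¹ V⁻¹) ≤ 1}, and D = {V : V > G⁻¹ and det(V − G⁻¹) ≥ det G⁻¹}. -/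
open Matrix

/-- PosDef criterion for 2x2 real symmetric matrices. -/
lemma posDef_fin_two_s7 {M : Matrix (Fin 2) (Fin 2) ℝ} (hsym : M 1 0 = M 0 1)
    (ha : 0 < M 0 0) (hd : 0 < M.det) : M.PosDef := by
  rw [Matrix.posDef_iff_dotProduct_mulVec]
  constructor
  · rw [Matrix.IsHermitian]
    ext i j
    fin_cases i <;> fin_cases j <;> simp [Matrix.conjTranspose_apply, hsym]
  · intro x hx
    have hx' : x 0 ≠ 0 ∨ x 1 ≠ 0 := by
      by_contra h
      push_neg at h
      apply hx
      ext i; fin_cases i <;> simp [h.1, h.2]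
    have hdet : M 0 0 * M 1 1 - M 0 1 * M 0 1 > 0 := by
      have := hd; rw [Matrix.det_fin_two, hsym] at this; linarith
    simp only [dotProduct, Matrix.mulVec, Fin.sum_univ_two, star_trivial, dotProduct, hsym]
    rcases eq_or_ne (x 1) 0 with h1 | h1
    · have h0 : x 0 ≠ 0 := by tauto
      rw [h1]
      have : (0:ℝ) < x 0 * x 0 := mul_self_pos.mpr h0
      nlinarith [mul_pos ha this]
    · have hx1 : (0:ℝ) < x 1 * x 1 := mul_self_pos.mpr h1
      nlinarith [sq_nonneg (M 0 0 * x 0 + M 0 1 * x 1), mul_pos hdet hx1, mul_pos ha hdet]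

lemma posDef_entries {M : Matrix (Fin 2) (Fin 2) ℝ} (h : M.PosDef) :
    0 < M 0 0 ∧ 0 < M 1 1 ∧ M 1 0 = M 0 1 ∧ 0 < M.det := by
  have h0 := (Matrix.posDef_iff_dotProduct_mulVec.mp h).2 (x := Pi.single 0 1) (by simp [Function.ne_iff])
  have h1 := (Matrix.posDef_iff_dotProduct_mulVec.mp h).2 (x := Pi.single 1 1) (by simp [Function.ne_iff])
  simp [dotProduct, Matrix.mulVec, Fin.sum_univ_two, Pi.single_apply] at h0 h1
  refine ⟨h0, h1, ?_, h.det_pos⟩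
  have := congrFun (congrFun h.1 0) 1
  simpa [Matrix.conjTranspose_apply] using this

/-- Trace inequality for 2×2 positive matrices (entry form). -/
lemma sqrt_trace_lemma (w1 w2 w3 a1 a2 a3 g : ℝ) (hw1 : 0 < w1) (hw : w2*w2 < w1*w3)
    (ha1 : 0 < a1) (ha3 : 0 < a3) (ha : a2*a2 < a1*a3) (hg : 0 < g)
    (hd : g ≤ a1*a3 - a2*a2) :
    2 * Real.sqrt ((w1*w3 - w2*w2) * g) ≤ w1*a1 + 2*w2*a2 + w3*a3 := by
  have hw3 : 0 < w3 := by nlinarith [mul_self_nonneg w2]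
  have ht : 0 < w1*a1 + 2*w2*a2 + w3*a3 := by
    nlinarith [mul_pos (sub_pos.mpr hw) (sub_pos.mpr ha), sq_nonneg (w1*a1 - w3*a3),
      mul_pos hw1 ha1, mul_pos hw3 ha3]
  have hsq : 4*((w1*w3 - w2*w2)*(a1*a3 - a2*a2)) ≤ (w1*a1 + 2*w2*a2 + w3*a3)^2 := by
    nlinarith [sq_nonneg (a1*w1^2 + 2*a2*w2*w1 + a3*(2*w2^2 - w1*w3)),
      mul_nonneg (le_of_lt (sub_pos.mpr hw)) (sq_nonneg (w1*a2 + w2*a3)),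
      mul_pos hw1 hw1, mul_pos hw1 hw3, sq_nonneg w1]
  have h4 : 4*((w1*w3 - w2*w2)*g) ≤ (w1*a1 + 2*w2*a2 + w3*a3)^2 := by
    have := mul_le_mul_of_nonneg_left hd (le_of_lt (sub_pos.mpr hw))
    nlinarith
  have heq : Real.sqrt (4*((w1*w3 - w2*w2)*g)) = 2 * Real.sqrt ((w1*w3 - w2*w2)*g) := by
    rw [show (4:ℝ)*((w1*w3 - w2*w2)*g) = 2^2*((w1*w3 - w2*w2)*g) by ring,
      Real.sqrt_mul (by norm_num : (0:ℝ) ≤ 2^2), Real.sqrt_sq (by norm_num : (0:ℝ) ≤ 2)]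
  calc 2 * Real.sqrt ((w1*w3 - w2*w2)*g) = Real.sqrt (4*((w1*w3 - w2*w2)*g)) := heq.symm
    _ ≤ Real.sqrt ((w1*a1 + 2*w2*a2 + w3*a3)^2) := Real.sqrt_le_sqrt h4
    _ = w1*a1 + 2*w2*a2 + w3*a3 := Real.sqrt_sq ht.le

lemma keyE2 (Ginv V : Matrix (Fin 2) (Fin 2) ℝ) (hG : Ginv.PosDef)
    (hA : (V - Ginv).PosDef) (hd : Ginv.det ≤ (V - Ginv).det)
    (W : Matrix (Fin 2) (Fin 2) ℝ) (hW : W.PosDef) :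
    (W * Ginv).trace + 2 * Real.sqrt (W * Ginv).det ≤ (W * V).trace := by
  obtain ⟨hw1, hw3, hwsym, hwdet⟩ := posDef_entries hW
  obtain ⟨hg1, hg3, hgsym, hgdet⟩ := posDef_entries hG
  obtain ⟨ha1, ha3, hasym, hadet⟩ := posDef_entries hA
  have hg := hG.det_pos
  have hwdet' : W 0 1 * W 0 1 < W 0 0 * W 1 1 := by
    rw [Matrix.det_fin_two, hwsym] at hwdet; linarith
  have hadet' : (V - Ginv) 0 1 * ((V - Ginv) 0 1) < (V - Ginv) 0 0 * ((V - Ginv) 1 1) := by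
    rw [Matrix.det_fin_two, hasym] at hadet; linarith
  have hd' : Ginv.det ≤ (V - Ginv) 0 0 * ((V - Ginv) 1 1) - (V - Ginv) 0 1 * ((V - Ginv) 0 1) := by
    rw [Matrix.det_fin_two (A := V - Ginv), hasym] at hd; linarith
  have main := sqrt_trace_lemma (W 0 0) (W 0 1) (W 1 1) ((V - Ginv) 0 0) ((V - Ginv) 0 1)
    ((V - Ginv) 1 1) Ginv.det hw1 hwdet' ha1 ha3 hadet' hg hd'
  have hVsym : V 1 0 = V 0 1 := by
    have := hasym; simp only [Matrix.sub_apply] at this; linarith [hgsym]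
  have hdetWG : (W * Ginv).det = (W 0 0 * W 1 1 - W 0 1 * W 0 1) * Ginv.det := by
    rw [Matrix.det_mul]
    congr 1
    rw [Matrix.det_fin_two, hwsym]
  have htr : (W * V).trace = (W * Ginv).trace +
      (W 0 0 * ((V - Ginv) 0 0) + 2 * W 0 1 * ((V - Ginv) 0 1) + W 1 1 * ((V - Ginv) 1 1)) := by
    simp only [Matrix.trace, Matrix.diag, Matrix.mul_apply, Fin.sum_univ_two,
      Matrix.sub_apply, hwsym, hVsym, hgsym]
    ring
  rw [htr, hdetWG]
  linarith [main]

lemma keyE1 (Ginv V : Matrix (Fin 2) (Fin 2) ℝ) (hG : Ginv.PosDef) (hV : V.IsHermitian)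
    (h : ∀ W : Matrix (Fin 2) (Fin 2) ℝ, W.PosDef →
      (W * Ginv).trace + 2 * Real.sqrt (W * Ginv).det ≤ (W * V).trace) :
    (V - Ginv).PosDef ∧ Ginv.det ≤ (V - Ginv).det := by
  obtain ⟨hg1, hg3, hgsym, hgdet⟩ := posDef_entries hG
  have hg : 0 < Ginv.det := hG.det_pos
  have hVsym : V 1 0 = V 0 1 := by
    have := congrFun (congrFun hV 1) 0
    simpa [Matrix.conjTranspose_apply] using this.symm
  set a1 := V 0 0 - Ginv 0 0 with ha1def
  set a2 := V 0 1 - Ginv 0 1 with ha2def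
  set a3 := V 1 1 - Ginv 1 1 with ha3def
  have key : ∀ w1 w2 w3 : ℝ, 0 < w1 → w2*w2 < w1*w3 →
      2 * Real.sqrt ((w1*w3 - w2*w2) * Ginv.det) ≤ w1*a1 + 2*w2*a2 + w3*a3 := by
    intro w1 w2 w3 h1 h2
    have hw3 : 0 < w3 := by nlinarith [mul_self_nonneg w2]
    have hWpd : (!![w1, w2; w2, w3]).PosDef := by
      apply posDef_fin_two_s7
      · simp
      · simpa using h1
      · rw [Matrix.det_fin_two_of]; nlinarith
    have hh := h _ hWpd
    have hdetWG : (!![w1, w2; w2, w3] * Ginv).det = (w1*w3 - w2*w2) * Ginv.det := by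
      rw [Matrix.det_mul]
      congr 1
      rw [Matrix.det_fin_two_of]
      try ring
    have htr : (!![w1, w2; w2, w3] * V).trace = (!![w1, w2; w2, w3] * Ginv).trace +
        (w1*a1 + 2*w2*a2 + w3*a3) := by
      simp only [Matrix.trace, Matrix.diag, Matrix.mul_apply, Fin.sum_univ_two,
        ha1def, ha2def, ha3def, hVsym, hgsym]
      simp
      try ring
    rw [htr, hdetWG] at hh
    linarith
  have ha1 : 0 < a1 := by
    rcases le_or_gt a3 0 with h3 | h3
    · have hk := key 1 0 1 one_pos (by norm_num)
      have hs : 0 < Real.sqrt ((1*1 - 0*0) * Ginv.det) := Real.sqrt_pos.mpr (by nlinarith)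
      linarith
    · have ha3ne : a3 ≠ 0 := ne_of_gt h3
      have hk := key 1 0 (Ginv.det / a3^2) one_pos
        (by simpa using div_pos hg (pow_pos h3 2))
      have he : (1 * (Ginv.det / a3^2) - 0*0) * Ginv.det = (Ginv.det / a3)^2 := by
        field_simp; ring
      rw [he, Real.sqrt_sq (div_pos hg h3).le] at hk
      have hpos : 0 < Ginv.det / a3 := div_pos hg h3
      have h2 : (Ginv.det / a3^2) * a3 = Ginv.det / a3 := by
        field_simp
      nlinarith [hk]
  have hdA : Ginv.det ≤ a1*a3 - a2*a2 := by
    have hposdef : (-(a1*a2))*(-(a1*a2)) < (a2^2 + Ginv.det)*(a1^2) := by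
      nlinarith [mul_pos hg (mul_pos ha1 ha1)]
    have hk := key (a2^2 + Ginv.det) (-(a1*a2)) (a1^2)
      (by nlinarith [sq_nonneg a2]) hposdef
    rw [show ((a2^2 + Ginv.det)*(a1^2) - (-(a1*a2))*(-(a1*a2))) * Ginv.det
        = (Ginv.det * a1)^2 by ring, Real.sqrt_sq (mul_nonneg hg.le ha1.le)] at hk
    nlinarith [hk, ha1]
  have hdet2 : (V - Ginv).det = a1*a3 - a2*a2 := by
    rw [Matrix.det_fin_two]
    simp only [Matrix.sub_apply, hVsym, hgsym, ha1def, ha2def, ha3def]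
    try ring
  have hApd : (V - Ginv).PosDef := by
    apply posDef_fin_two_s7
    · simp only [Matrix.sub_apply]; rw [hVsym, hgsym]
    · simp only [Matrix.sub_apply]; rw [← ha1def]; exact ha1
    · rw [hdet2]; nlinarith
  exact ⟨hApd, by rw [hdet2]; exact hdA⟩

lemma keyGM (Ginv V : Matrix (Fin 2) (Fin 2) ℝ) (hG : Ginv.PosDef)
    (hA : (V - Ginv).PosDef) :
    ((Ginv * V⁻¹).trace ≤ 1 ↔ Ginv.det ≤ (V - Ginv).det) := by
  have hVpd : V.PosDef := by
    have := Matrix.PosDef.add_posSemidef hG hA.posSemidef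
    simpa using this
  have hd : 0 < V.det := hVpd.det_pos
  obtain ⟨hg1, hg3, hgsym, hgdet⟩ := posDef_entries hG
  obtain ⟨ha1, ha3, hasym, hadet⟩ := posDef_entries hA
  have hVsym : V 1 0 = V 0 1 := by
    have := hasym; simp only [Matrix.sub_apply] at this; linarith [hgsym]
  have hinv : V⁻¹ = V.det⁻¹ • V.adjugate := by
    rw [Matrix.inv_def, Ring.inverse_eq_inv]
  have htr : (Ginv * V⁻¹).trace = V.det⁻¹ * (Ginv * V.adjugate).trace := by
    rw [hinv, Matrix.mul_smul, Matrix.trace_smul, smul_eq_mul]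
  have hident : (Ginv * V.adjugate).trace = V.det - ((V - Ginv).det - Ginv.det) := by
    simp only [Matrix.trace, Matrix.diag, Matrix.mul_apply, Fin.sum_univ_two,
      Matrix.adjugate_fin_two, Matrix.det_fin_two, Matrix.sub_apply, hVsym, hgsym,
      Matrix.cons_val', Matrix.cons_val_zero, Matrix.cons_val_one, Matrix.head_cons,
      Matrix.empty_val', Matrix.cons_val_fin_one, Matrix.head_fin_const, Matrix.of_apply]
    ring
  rw [htr, hident, inv_mul_le_iff₀ hd, mul_one]
  constructor <;> intro h <;> linarith

/-- For a fixed 2×2 symmetric positive definite `G⁻¹`, the sets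
`D_N`, `D_GM` and `D` of symmetric matrices coincide. -/
theorem stmt7 (Ginv : Matrix (Fin 2) (Fin 2) ℝ) (hG : Ginv.PosDef) :
    {V : Matrix (Fin 2) (Fin 2) ℝ | V.IsHermitian ∧
      ∀ W : Matrix (Fin 2) (Fin 2) ℝ, W.PosDef →
        (W * Ginv).trace + 2 * Real.sqrt (W * Ginv).det ≤ (W * V).trace} =
    {V : Matrix (Fin 2) (Fin 2) ℝ | V.IsHermitian ∧
      (V - Ginv).PosDef ∧ (Ginv * V⁻¹).trace ≤ 1} ∧
    {V : Matrix (Fin 2) (Fin 2) ℝ | V.IsHermitian ∧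
      (V - Ginv).PosDef ∧ (Ginv * V⁻¹).trace ≤ 1} =
    {V : Matrix (Fin 2) (Fin 2) ℝ | V.IsHermitian ∧
      (V - Ginv).PosDef ∧ Ginv.det ≤ (V - Ginv).det} := by
  have e23 : {V : Matrix (Fin 2) (Fin 2) ℝ | V.IsHermitian ∧
      (V - Ginv).PosDef ∧ (Ginv * V⁻¹).trace ≤ 1} =
      {V : Matrix (Fin 2) (Fin 2) ℝ | V.IsHermitian ∧
      (V - Ginv).PosDef ∧ Ginv.det ≤ (V - Ginv).det} := by
    ext V
    simp only [Set.mem_setOf_eq]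
    constructor
    · rintro ⟨hV, hA, hc⟩
      exact ⟨hV, hA, (keyGM Ginv V hG hA).mp hc⟩
    · rintro ⟨hV, hA, hc⟩
      exact ⟨hV, hA, (keyGM Ginv V hG hA).mpr hc⟩
  have e13 : {V : Matrix (Fin 2) (Fin 2) ℝ | V.IsHermitian ∧
      ∀ W : Matrix (Fin 2) (Fin 2) ℝ, W.PosDef →
        (W * Ginv).trace + 2 * Real.sqrt (W * Ginv).det ≤ (W * V).trace} =
      {V : Matrix (Fin 2) (Fin 2) ℝ | V.IsHermitian ∧
      (V - Ginv).PosDef ∧ Ginv.det ≤ (V - Ginv).det} := by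
    ext V
    simp only [Set.mem_setOf_eq]
    constructor
    · rintro ⟨hV, h⟩
      obtain ⟨hA, hdd⟩ := keyE1 Ginv V hG hV h
      exact ⟨hV, hA, hdd⟩
    · rintro ⟨hV, hA, hdd⟩
      exact ⟨hV, fun W hW => keyE2 Ginv V hG hA hdd W hW⟩
  exact ⟨e13.trans e23.symm, e23⟩
end

section
/- For a 3×3 real symmetric positive semidefinite matrix V (the MSE matrix) with 2×2 upper-left block V₂ and (3,3)-entry v₃₃ > g³³ > 0, and scaling factor γ = v₃₃/(v₃₃ − g³³), the condition that Tr(W(3) V) ≥ (√(Tr(W G⁻¹) + 2√det(W G⁻¹)) + √(w₃ g³³))² for all block-diagonal W(3) = diag(W, w₃) with W > 0 and w₃ > 0 is equivalent to: V₂ > γ G⁻¹ and det(V₂ − γ G⁻¹) ≥ det(γ G⁻¹). -/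
open Matrix

lemma posdef2_iff (A : Matrix (Fin 2) (Fin 2) ℝ) (hs : A 0 1 = A 1 0) :
    A.PosDef ↔ 0 < A 0 0 ∧ 0 < A.det := by
  constructor
  · intro h
    refine ⟨?_, h.det_pos⟩
    have := h.dotProduct_mulVec_pos (x := ![1,0]) (by intro hx; simpa using congrFun hx 0)
    simpa [dotProduct, mulVec, Fin.sum_univ_two] using this
  · rintro ⟨h1, h2⟩
    rw [Matrix.det_fin_two] at h2
    refine Matrix.PosDef.of_dotProduct_mulVec_pos ?_ ?_
    · ext i j
      fin_cases i <;> fin_cases j <;> simp [Matrix.conjTranspose_apply, hs]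
    · intro x hx
      have e : star x ⬝ᵥ A *ᵥ x = A 0 0 * (x 0)^2 + 2 * A 0 1 * (x 0 * x 1) + A 1 1 * (x 1)^2 := by
        simp [dotProduct, mulVec, Fin.sum_univ_two, hs]
        ring
      rw [e]
      by_cases hx1 : x 1 = 0
      · have hx0 : x 0 ≠ 0 := by
          intro h0; exact hx (funext fun i => by fin_cases i <;> simp [h0, hx1])
        have : 0 < (x 0)^2 := by positivity
        rw [hx1]
        nlinarith
      · have hx1' : 0 < (x 1)^2 := by positivity
        rw [hs] at h2
        have key : A 0 0 * (A 0 0 * (x 0)^2 + 2 * A 0 1 * (x 0 * x 1) + A 1 1 * (x 1)^2)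
            = (A 0 0 * x 0 + A 0 1 * x 1)^2 + (A 0 0 * A 1 1 - A 1 0 * A 1 0) * (x 1)^2 := by
          rw [hs]; ring
        have hpos : 0 < A 0 0 * (A 0 0 * (x 0)^2 + 2 * A 0 1 * (x 0 * x 1) + A 1 1 * (x 1)^2) := by
          rw [key]
          exact add_pos_of_nonneg_of_pos (sq_nonneg _) (mul_pos h2 hx1')
        nlinarith [hpos]

lemma amgm (x y : ℝ) (hx : 0 ≤ x) (hy : 0 ≤ y) : 2 * Real.sqrt (x*y) ≤ x + y := by
  rw [Real.sqrt_mul hx]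
  nlinarith [sq_nonneg (Real.sqrt x - Real.sqrt y), Real.sq_sqrt hx, Real.sq_sqrt hy,
    Real.sqrt_nonneg x, Real.sqrt_nonneg y]

lemma tracepos (a b c x y z : ℝ) (ha : 0 < a) (hd : b^2 < a*c) (hx : 0 < x) (hdx : y^2 < x*z) :
    0 < a*x + c*z + 2*b*y := by
  have hc : 0 < c := by nlinarith [sq_nonneg b]
  have hz : 0 < z := by nlinarith [sq_nonneg y]
  have h4 : b^2*y^2 < (a*c)*(x*z) := by nlinarith [sq_nonneg b, sq_nonneg y]
  by_contra hcon
  push_neg at hcon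
  have h5 : 0 < a*x + c*z := by positivity
  have h6 : 2*b*y ≤ -(a*x + c*z) := by linarith
  have h7 : (a*x + c*z)^2 ≤ (2*b*y)^2 := by nlinarith
  nlinarith [sq_nonneg (a*x - c*z)]

lemma key1 (a b c p q r d : ℝ) (ha : 0 < a) (hW : b^2 < a*c) (hp : 0 < p) (hr : 0 < r)
    (hq : q^2 ≤ p*r) (hd : 0 ≤ d) (hdm : d ≤ p*r - q^2) :
    2 * Real.sqrt ((a*c - b^2) * d) ≤ a*p + c*r + 2*b*q := by
  have hc : 0 < c := by nlinarith [sq_nonneg b]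
  set u := a*c - b^2 with hu
  set w := p*r - q^2 with hwdef
  have hu0 : 0 < u := by simp [hu]; linarith
  have hw0 : 0 ≤ w := by simp [hwdef]; linarith
  -- step: |bq| + sqrt(uw) ≤ sqrt(ac*pr)
  have cross : 2 * (|b*q| * Real.sqrt (u*w)) ≤ b^2*w + u*q^2 := by
    have h1 : 2 * Real.sqrt ((b^2*w)*(u*q^2)) ≤ b^2*w + u*q^2 :=
      amgm _ _ (by positivity) (by positivity)
    have h2 : Real.sqrt ((b^2*w)*(u*q^2)) = |b*q| * Real.sqrt (u*w) := by
      rw [show (b^2*w)*(u*q^2) = (b*q)^2 * (u*w) by ring, Real.sqrt_mul (sq_nonneg (b*q)),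
        Real.sqrt_sq_eq_abs]
    linarith [h2 ▸ h1]
  have s3 : |b*q| + Real.sqrt (u*w) ≤ Real.sqrt (a*c*(p*r)) := by
    rw [Real.le_sqrt (by positivity) (by positivity)]
    have e1 : (|b*q|)^2 = b^2*q^2 := by rw [sq_abs]; ring
    have e2 : (Real.sqrt (u*w))^2 = u*w := Real.sq_sqrt (by positivity)
    have : a*c*(p*r) = b^2*q^2 + (b^2*w + u*q^2) + u*w := by simp [hu, hwdef]; ring
    nlinarith [cross]
  have s1 : 2 * Real.sqrt (a*c*(p*r)) ≤ a*p + c*r := by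
    have := amgm (a*p) (c*r) (by positivity) (by positivity)
    rwa [show (a*p)*(c*r) = a*c*(p*r) by ring] at this
  have s4 : 2 * Real.sqrt (u*w) ≤ a*p + c*r + 2*b*q := by
    have := neg_abs_le (b*q)
    linarith
  have s5 : Real.sqrt (u*d) ≤ Real.sqrt (u*w) :=
    Real.sqrt_le_sqrt (by nlinarith)
  linarith


lemma sqrtaux (a g v T : ℝ) (ha : 0 < a) (hg : 0 < g) (hv : g < v) :
    (∀ t : ℝ, 0 < t → (Real.sqrt a + Real.sqrt (t*g))^2 ≤ T + t*v) ↔ v/(v-g)*a ≤ T := by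
  have hvg : 0 < v - g := by linarith
  constructor
  · intro h
    have ht : 0 < g*a/(v-g)^2 := by positivity
    have h1 := h _ ht
    have e1 : Real.sqrt (g*a/(v-g)^2 * g) = g * Real.sqrt a / (v-g) := by
      rw [show g*a/(v-g)^2*g = (g * Real.sqrt a / (v-g))^2 by
        rw [div_pow, mul_pow, Real.sq_sqrt ha.le]; ring]
      exact Real.sqrt_sq (by positivity)
    rw [e1] at h1
    have e2 : (Real.sqrt a + g * Real.sqrt a / (v-g))^2
        = a * (v/(v-g))^2 := by
      have : Real.sqrt a + g * Real.sqrt a / (v-g) = Real.sqrt a * (v/(v-g)) := by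
        field_simp; ring
      rw [this, mul_pow, Real.sq_sqrt ha.le]
    rw [e2] at h1
    rw [div_mul_eq_mul_div, div_le_iff₀ hvg]
    have h2 : a * (v/(v-g))^2 - (g*a/(v-g)^2)*v ≤ T := by linarith
    have e3 : a * (v/(v-g))^2 - (g*a/(v-g)^2)*v = v*a/(v-g) := by
      field_simp
    rw [e3] at h2
    rw [div_le_iff₀ hvg] at h2
    linarith
  · intro h t ht
    have expand : (Real.sqrt a + Real.sqrt (t*g))^2
        = a + t*g + 2*Real.sqrt (a*(t*g)) := by
      rw [add_sq, Real.sq_sqrt ha.le, Real.sq_sqrt (by positivity : (0:ℝ) ≤ t*g),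
        Real.sqrt_mul ha.le]
      ring
    rw [expand]
    have key : 2*Real.sqrt (a*(t*g)) ≤ g*a/(v-g) + t*(v-g) := by
      have := amgm (g*a/(v-g)) (t*(v-g)) (by positivity) (by positivity)
      rwa [show g*a/(v-g)*(t*(v-g)) = a*(t*g) by field_simp] at this
    have e4 : a + t*g + (g*a/(v-g) + t*(v-g)) = v/(v-g)*a + t*v := by
      field_simp; ring
    linarith

lemma sqrtled (D d : ℝ) (hD : 0 < D) (hd : 0 < d) (h : 2 * Real.sqrt (D*d) ≤ 2*D) : d ≤ D := by
  nlinarith [Real.sq_sqrt (mul_nonneg hD.le hd.le), Real.sqrt_nonneg (D*d)]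

set_option maxHeartbeats 1000000 in
lemma keyB (M : Matrix (Fin 2) (Fin 2) ℝ) (hs : M 0 1 = M 1 0) (d : ℝ) (hd : 0 < d) :
    (∀ W : Matrix (Fin 2) (Fin 2) ℝ, W.PosDef → 2 * Real.sqrt (W.det * d) ≤ (W * M).trace) ↔
    (M.PosDef ∧ d ≤ M.det) := by
  have tr : ∀ W : Matrix (Fin 2) (Fin 2) ℝ,
      (W * M).trace = W 0 0 * M 0 0 + W 0 1 * M 1 0 + W 1 0 * M 0 1 + W 1 1 * M 1 1 := by
    intro W
    simp [Matrix.trace_fin_two, Matrix.mul_apply, Fin.sum_univ_two]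
    ring
  set p := M 0 0 with hpdef
  set q := M 0 1 with hqdef
  set r := M 1 1 with hrdef
  have hdetM : M.det = p*r - q^2 := by
    rw [Matrix.det_fin_two, ← hs]; ring
  constructor
  · intro H
    have sd : 0 < Real.sqrt d := Real.sqrt_pos.mpr hd
    -- from W = identity-ish
    have hid : (!![1,0;0,1] : Matrix (Fin 2) (Fin 2) ℝ).PosDef := by
      rw [posdef2_iff _ (by norm_num)]
      constructor <;> norm_num [Matrix.det_fin_two]
    have hpr := H _ hid
    rw [tr] at hpr
    simp [Matrix.det_fin_two] at hpr
    -- hpr : 2 * Real.sqrt d ≤ p + r  (hopefully)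
    have hp : 0 < p := by
      by_contra hp0
      push_neg at hp0
      have hr0 : 0 < r := by linarith
      have hε : 0 < d/r^2 := by positivity
      have hW : (!![1,0;0,d/r^2] : Matrix (Fin 2) (Fin 2) ℝ).PosDef := by
        rw [posdef2_iff _ (by norm_num)]
        refine ⟨by norm_num, ?_⟩
        rw [Matrix.det_fin_two]
        norm_num
        positivity
      have h2 := H _ hW
      rw [tr] at h2
      simp [Matrix.det_fin_two] at h2
      have e : Real.sqrt (d/r^2*d) = d/r := by
        rw [show d/r^2*d = (d/r)^2 by field_simp, Real.sqrt_sq (by positivity)]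
      rw [e] at h2
      have e2 : d/r^2*r = d/r := by field_simp
      rw [e2] at h2
      have : 0 < d/r := by positivity
      linarith
    have hr : 0 < r := by
      by_contra hr0
      push_neg at hr0
      have hε : 0 < d/p^2 := by positivity
      have hW : (!![d/p^2,0;0,1] : Matrix (Fin 2) (Fin 2) ℝ).PosDef := by
        rw [posdef2_iff _ (by norm_num)]
        refine ⟨by norm_num; positivity, ?_⟩
        rw [Matrix.det_fin_two]
        norm_num
        positivity
      have h2 := H _ hW
      rw [tr] at h2
      simp [Matrix.det_fin_two] at h2
      have e : Real.sqrt (d/p^2*d) = d/p := by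
        rw [show d/p^2*d = (d/p)^2 by field_simp, Real.sqrt_sq (by positivity)]
      rw [e] at h2
      have e2 : d/p^2*p = d/p := by field_simp
      rw [e2] at h2
      have : 0 < d/p := by positivity
      linarith
    have hdet : 0 < p*r - q^2 := by
      by_contra hdet0
      push_neg at hdet0
      set ε := p^2*d/(p+r)^2 with hεdef
      have hε : 0 < ε := by positivity
      have hW : (!![q^2+ε, -(q*p); -(q*p), p^2+ε] : Matrix (Fin 2) (Fin 2) ℝ).PosDef := by
        rw [posdef2_iff _ (by norm_num)]
        refine ⟨by norm_num; positivity, ?_⟩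
        rw [Matrix.det_fin_two]
        norm_num
        nlinarith [sq_nonneg p, sq_nonneg q]
      have h2 := H _ hW
      rw [tr, ← hs] at h2
      have trval : (!![q^2+ε, -(q*p); -(q*p), p^2+ε] : Matrix (Fin 2) (Fin 2) ℝ) 0 0 * p +
          (!![q^2+ε, -(q*p); -(q*p), p^2+ε] : Matrix (Fin 2) (Fin 2) ℝ) 0 1 * q +
          (!![q^2+ε, -(q*p); -(q*p), p^2+ε] : Matrix (Fin 2) (Fin 2) ℝ) 1 0 * q +
          (!![q^2+ε, -(q*p); -(q*p), p^2+ε] : Matrix (Fin 2) (Fin 2) ℝ) 1 1 * r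
          = p*(p*r - q^2) + ε*(p+r) := by
        norm_num
        ring
      rw [trval] at h2
      have hdetW : ε*p^2 ≤ (!![q^2+ε, -(q*p); -(q*p), p^2+ε] : Matrix (Fin 2) (Fin 2) ℝ).det := by
        rw [Matrix.det_fin_two]
        norm_num
        nlinarith [sq_nonneg q, sq_nonneg ε]
      have l2 : Real.sqrt (ε*p^2*d) ≤
          Real.sqrt ((!![q^2+ε, -(q*p); -(q*p), p^2+ε] : Matrix (Fin 2) (Fin 2) ℝ).det * d) :=
        Real.sqrt_le_sqrt (by nlinarith)
      have l1 : Real.sqrt (ε*p^2*d) = p^2*d/(p+r) := by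
        rw [show ε*p^2*d = (p^2*d/(p+r))^2 by rw [hεdef]; field_simp,
          Real.sqrt_sq (by positivity)]
      rw [l1] at l2
      have hc : 0 < p^2*d/(p+r) := by positivity
      have : ε*(p+r) = p^2*d/(p+r) := by rw [hεdef]; field_simp
      nlinarith [h2, l2]
    refine ⟨(posdef2_iff M hs).mpr ⟨hp, by rw [hdetM]; linarith⟩, ?_⟩
    -- adjugate test
    have hW : (!![r, -q; -q, p] : Matrix (Fin 2) (Fin 2) ℝ).PosDef := by
      rw [posdef2_iff _ (by norm_num)]
      refine ⟨by norm_num [hr], ?_⟩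
      rw [Matrix.det_fin_two]
      norm_num
      nlinarith
    have h2 := H _ hW
    rw [tr, ← hs] at h2
    have trval : (!![r, -q; -q, p] : Matrix (Fin 2) (Fin 2) ℝ) 0 0 * p +
        (!![r, -q; -q, p] : Matrix (Fin 2) (Fin 2) ℝ) 0 1 * q +
        (!![r, -q; -q, p] : Matrix (Fin 2) (Fin 2) ℝ) 1 0 * q +
        (!![r, -q; -q, p] : Matrix (Fin 2) (Fin 2) ℝ) 1 1 * r = 2*(p*r - q^2) := by
      norm_num; ring
    rw [trval] at h2
    have hdW : (!![r, -q; -q, p] : Matrix (Fin 2) (Fin 2) ℝ).det = p*r - q^2 := by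
      rw [Matrix.det_fin_two]; norm_num; ring
    rw [hdW] at h2
    rw [hdetM]
    exact sqrtled _ _ hdet hd (by linarith)
  · rintro ⟨hM, hdM⟩ W hW
    have hWs : W 0 1 = W 1 0 := by
      have := hW.1.apply 1 0
      simpa using this
    obtain ⟨hp, hdM2⟩ := (posdef2_iff M hs).mp hM
    obtain ⟨ha, hdW2⟩ := (posdef2_iff W hWs).mp hW
    rw [hdetM] at hdM2 hdM
    rw [Matrix.det_fin_two] at hdW2
    rw [hWs] at hdW2
    have hr : 0 < r := by nlinarith [sq_nonneg q]
    have key := key1 (W 0 0) (W 1 0) (W 1 1) p q r d ha (by nlinarith) hp hr (by nlinarith) hd.le (by linarith)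
    rw [tr, ← hs, Matrix.det_fin_two, hWs]
    calc 2 * Real.sqrt ((W 0 0 * W 1 1 - W 1 0 * W 1 0) * d)
        = 2 * Real.sqrt ((W 0 0 * W 1 1 - (W 1 0)^2) * d) := by
          rw [show W 0 0 * W 1 1 - W 1 0 * W 1 0 = W 0 0 * W 1 1 - (W 1 0)^2 by ring]
      _ ≤ W 0 0 * p + W 1 1 * r + 2 * (W 1 0) * q := key
      _ = W 0 0 * p + W 1 0 * q + W 1 0 * q + W 1 1 * r := by ring

set_option maxHeartbeats 1000000 in

set_option maxHeartbeats 1000000 in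
/-- For a 3×3 positive semidefinite MSE matrix `V` with upper-left
block `V₂` and `v₃₃ = V 2 2 > g³³ > 0`, with `γ = v₃₃/(v₃₃ − g³³)`, the family of
HGM inequalities `Tr(W(3) V) ≥ (√(Tr(W G⁻¹) + 2√det(W G⁻¹)) + √(w₃ g³³))²` for all
block-diagonal `W(3) = diag(W, w₃)`, `W > 0`, `w₃ > 0`, is equivalent to
`V₂ > γ G⁻¹` and `det(V₂ − γ G⁻¹) ≥ det(γ G⁻¹)`. -/
theorem stmt8 (Ginv : Matrix (Fin 2) (Fin 2) ℝ) (hG : Ginv.PosDef)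
    (g₃₃ : ℝ) (hg : 0 < g₃₃)
    (V : Matrix (Fin 3) (Fin 3) ℝ) (hV : V.PosSemidef) (hv : g₃₃ < V 2 2) :
    (∀ (W : Matrix (Fin 2) (Fin 2) ℝ) (w₃ : ℝ), W.PosDef → 0 < w₃ →
      (Real.sqrt ((W * Ginv).trace + 2 * Real.sqrt (W * Ginv).det) +
        Real.sqrt (w₃ * g₃₃)) ^ 2 ≤
      ((!![W 0 0, W 0 1, 0; W 1 0, W 1 1, 0; 0, 0, w₃] :
          Matrix (Fin 3) (Fin 3) ℝ) * V).trace) ↔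
    ((!![V 0 0, V 0 1; V 1 0, V 1 1] - (V 2 2 / (V 2 2 - g₃₃)) • Ginv).PosDef ∧
      ((V 2 2 / (V 2 2 - g₃₃)) • Ginv).det ≤
        (!![V 0 0, V 0 1; V 1 0, V 1 1] - (V 2 2 / (V 2 2 - g₃₃)) • Ginv).det) := by
  
  have hVs : V 0 1 = V 1 0 := by simpa using hV.1.apply 1 0
  have hGs : Ginv 0 1 = Ginv 1 0 := by simpa using hG.1.apply 1 0
  have hvg : 0 < V 2 2 - g₃₃ := by linarith
  have hv0 : 0 < V 2 2 := lt_trans hg hv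
  set γ := V 2 2 / (V 2 2 - g₃₃) with hγdef
  have hγ0 : 0 < γ := div_pos hv0 hvg
  obtain ⟨hG00, hdG⟩ := (posdef2_iff Ginv hGs).mp hG
  set M := !![V 0 0, V 0 1; V 1 0, V 1 1] - γ • Ginv with hMdef
  have hMs : M 0 1 = M 1 0 := by
    simp [hMdef, Matrix.sub_apply, Matrix.smul_apply, hVs, hGs]
  set d := (γ • Ginv).det with hddef
  have hdd : d = γ^2 * Ginv.det := by
    rw [hddef, Matrix.det_smul]; norm_num
  have hdpos : 0 < d := by rw [hdd]; positivity
  rw [← keyB M hMs d hdpos]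
  have hGd2 : (Ginv 0 1)^2 < Ginv 0 0 * Ginv 1 1 := by
    rw [Matrix.det_fin_two, hGs] at hdG; rw [hGs]; nlinarith
  have main : ∀ W : Matrix (Fin 2) (Fin 2) ℝ, W.PosDef →
      ((∀ w₃ : ℝ, 0 < w₃ →
        (Real.sqrt ((W * Ginv).trace + 2 * Real.sqrt (W * Ginv).det) +
          Real.sqrt (w₃ * g₃₃)) ^ 2 ≤
        ((!![W 0 0, W 0 1, 0; W 1 0, W 1 1, 0; 0, 0, w₃] :
            Matrix (Fin 3) (Fin 3) ℝ) * V).trace) ↔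
      2 * Real.sqrt (W.det * d) ≤ (W * M).trace) := by
    intro W hW
    have hWs : W 0 1 = W 1 0 := by simpa using hW.1.apply 1 0
    obtain ⟨hW00, hdW⟩ := (posdef2_iff W hWs).mp hW
    have hWd2 : (W 0 1)^2 < W 0 0 * W 1 1 := by
      rw [Matrix.det_fin_two, ← hWs] at hdW; nlinarith
    set T := W 0 0 * V 0 0 + W 0 1 * V 1 0 + W 1 0 * V 0 1 + W 1 1 * V 1 1 with hT
    have tr3 : ∀ w₃ : ℝ, ((!![W 0 0, W 0 1, 0; W 1 0, W 1 1, 0; 0, 0, w₃] :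
        Matrix (Fin 3) (Fin 3) ℝ) * V).trace = T + w₃ * V 2 2 := by
      intro w₃
      rw [hT]
      simp [Matrix.trace_fin_three, Matrix.mul_apply, Fin.sum_univ_three,
        Matrix.vecMul, dotProduct]
      ring
    have trG : (W * Ginv).trace = W 0 0 * Ginv 0 0 + W 1 1 * Ginv 1 1 + 2 * W 0 1 * Ginv 0 1 := by
      simp [Matrix.trace_fin_two, Matrix.mul_apply, Fin.sum_univ_two, hWs, hGs]
      ring
    have detG : (W * Ginv).det = W.det * Ginv.det := Matrix.det_mul _ _
    set a := (W * Ginv).trace + 2 * Real.sqrt (W * Ginv).det with ha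
    have hapos : 0 < a := by
      have h1 := tracepos (W 0 0) (W 0 1) (W 1 1) (Ginv 0 0) (Ginv 0 1) (Ginv 1 1)
        hW00 hWd2 hG00 hGd2
      have h2 : 0 ≤ Real.sqrt (W * Ginv).det := Real.sqrt_nonneg _
      rw [ha, trG]; linarith
    have base := sqrtaux a g₃₃ (V 2 2) T hapos hg hv
    have step1 : (∀ w₃ : ℝ, 0 < w₃ →
        (Real.sqrt a + Real.sqrt (w₃ * g₃₃)) ^ 2 ≤
        ((!![W 0 0, W 0 1, 0; W 1 0, W 1 1, 0; 0, 0, w₃] :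
            Matrix (Fin 3) (Fin 3) ℝ) * V).trace) ↔
        (∀ t : ℝ, 0 < t → (Real.sqrt a + Real.sqrt (t * g₃₃)) ^ 2 ≤ T + t * V 2 2) := by
      apply forall_congr'
      intro w₃
      apply imp_congr Iff.rfl
      rw [tr3 w₃]
    rw [step1, base]
    -- now: γ * a ≤ T ↔ 2√(W.det * d) ≤ (W*M).trace
    have trB : (W * (!![V 0 0, V 0 1; V 1 0, V 1 1] : Matrix (Fin 2) (Fin 2) ℝ)).trace = T := by
      rw [hT]
      simp [Matrix.trace_fin_two, Matrix.mul_apply, Fin.sum_univ_two]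
      ring
    have trM : (W * M).trace = T - γ * (W * Ginv).trace := by
      rw [hMdef, Matrix.mul_sub, Matrix.mul_smul, Matrix.trace_sub, Matrix.trace_smul, trB]
      simp [smul_eq_mul]
    have sqrtd : Real.sqrt (W.det * d) = γ * Real.sqrt ((W * Ginv).det) := by
      rw [show W.det * d = γ^2 * (W * Ginv).det by rw [detG, hdd]; ring,
        Real.sqrt_mul (sq_nonneg γ), Real.sqrt_sq hγ0.le]
    rw [trM, sqrtd, ha]
    constructor <;> intro h <;> nlinarith [h, Real.sqrt_nonneg ((W * Ginv).det)]
  constructor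
  · intro h W hW
    exact (main W hW).mp (fun w₃ hw => h W w₃ hW hw)
  · intro h W w₃ hW hw
    exact (main W hW).mpr (h W hW) w₃ hw
end

section
/- For the qubit model ρ_θ = (1/2)(I + θ₁cos θ₃ σ₁ + θ₁ sin θ₃ σ₂ + θ₂ σ₃) with θ₁ ≠ 0 and θ₁² + θ₂² < 1, the inverse SLD Fisher information matrix for the three parameters (θ₁, θ₂, θ₃) is block diagonal: G(3)⁻¹ = diag((1−θ₁², −θ₁θ₂; −θ₁θ₂, 1−θ₂²), 1/θ₁²). In particular the parameters (θ₁, θ₂) are orthogonal to θ₃ with respect to the SLD Fisher information. -/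
set_option maxHeartbeats 1000000


open Matrix

/-- The qubit state `ρ_θ` of the model. -/
noncomputable def rhoQ (θ₁ θ₂ θ₃ : ℝ) : Matrix (Fin 2) (Fin 2) ℂ :=
  !![(1 + θ₂) / 2, θ₁ * Complex.exp (-(Complex.I * θ₃)) / 2;
     θ₁ * Complex.exp (Complex.I * θ₃) / 2, (1 - θ₂) / 2]

/-- The partial derivatives `∂_i ρ_θ` for `i = 1, 2, 3`. -/
noncomputable def drhoQ (θ₁ θ₂ θ₃ : ℝ) : Fin 3 → Matrix (Fin 2) (Fin 2) ℂ :=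
  ![!![0, Complex.exp (-(Complex.I * θ₃)) / 2;
      Complex.exp (Complex.I * θ₃) / 2, 0],
    !![1 / 2, 0; 0, -(1 / 2)],
    !![0, -(Complex.I * θ₁ * Complex.exp (-(Complex.I * θ₃))) / 2;
      Complex.I * θ₁ * Complex.exp (Complex.I * θ₃) / 2, 0]]

/-- For the qubit model with `θ₁ ≠ 0`, `θ₁² + θ₂² < 1`, if `L i`
are Hermitian SLD operators (`∂_i ρ = (ρ L_i + L_i ρ)/2`) and
`G i j = Re Tr(ρ L_i L_j)` is the SLD Fisher information matrix, then the inverse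
of `G` is `diag((1−θ₁², −θ₁θ₂; −θ₁θ₂, 1−θ₂²), 1/θ₁²)`; in particular `(θ₁, θ₂)`
are orthogonal to `θ₃`. -/
theorem stmt10 (θ₁ θ₂ θ₃ : ℝ) (h1 : θ₁ ≠ 0) (h : θ₁ ^ 2 + θ₂ ^ 2 < 1)
    (L : Fin 3 → Matrix (Fin 2) (Fin 2) ℂ) (hL : ∀ i, (L i).IsHermitian)
    (hSLD : ∀ i, drhoQ θ₁ θ₂ θ₃ i =
      ((1 : ℂ) / 2) • (rhoQ θ₁ θ₂ θ₃ * L i + L i * rhoQ θ₁ θ₂ θ₃))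
    (G : Matrix (Fin 3) (Fin 3) ℝ)
    (hGdef : ∀ i j, G i j = ((rhoQ θ₁ θ₂ θ₃ * L i * L j).trace).re) :
    G * !![1 - θ₁ ^ 2, -(θ₁ * θ₂), 0; -(θ₁ * θ₂), 1 - θ₂ ^ 2, 0;
           0, 0, 1 / θ₁ ^ 2] = 1 ∧
    (!![1 - θ₁ ^ 2, -(θ₁ * θ₂), 0; -(θ₁ * θ₂), 1 - θ₂ ^ 2, 0;
        0, 0, 1 / θ₁ ^ 2] : Matrix (Fin 3) (Fin 3) ℝ) * G = 1 ∧
    G 0 2 = 0 ∧ G 1 2 = 0 := by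

  have hDr : (0:ℝ) < 1 - θ₁^2 - θ₂^2 := by linarith
  have hDr' : (1:ℝ) - θ₁^2 - θ₂^2 ≠ 0 := ne_of_gt hDr
  set E := Complex.exp (Complex.I * θ₃) with hEdef
  have hE : E ≠ 0 := Complex.exp_ne_zero _
  have hEi : E * E⁻¹ = 1 := mul_inv_cancel₀ hE
  have hDc : ((1:ℂ) - (θ₁:ℂ)^2 - (θ₂:ℂ)^2) ≠ 0 := by
    have := Complex.ofReal_ne_zero.mpr hDr'
    push_cast at this; convert this using 2 <;> ring
  set t := (θ₁:ℂ) with htdef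
  set s := (θ₂:ℂ) with hsdef
  set D := (1:ℂ) - t^2 - s^2 with hDdef
  -- entry equations
  have h00 := congrFun (congrFun (hSLD 0) 0) 0
  have h01 := congrFun (congrFun (hSLD 0) 0) 1
  have h10 := congrFun (congrFun (hSLD 0) 1) 0
  have h11 := congrFun (congrFun (hSLD 0) 1) 1
  simp [drhoQ, rhoQ, Matrix.mul_apply, Matrix.vecMul, dotProduct, Fin.sum_univ_two,
    Complex.exp_neg, ← hEdef] at h00 h01 h10 h11
  -- canonical equations for L 0
  have A1 : 2*(1+s)*(L 0 0 0)*E + t*(L 0 1 0) + t*E^2*(L 0 0 1) = 0 := by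
    linear_combination 2*E*h00 - t*(L 0 1 0)*hEi
  have A2 : 2*(L 0 0 1)*E + t*(L 0 0 0 + L 0 1 1) = 2 := by
    linear_combination (-4*E)*h01 + (2 - t*(L 0 0 0 + L 0 1 1))*hEi
  have A3 : 2*(L 0 1 0) + t*E*(L 0 0 0 + L 0 1 1) = 2*E := by
    linear_combination (-4)*h10
  have A4 : 2*(1-s)*(L 0 1 1)*E + t*E^2*(L 0 0 1) + t*(L 0 1 0) = 0 := by
    linear_combination 2*E*h11 - t*(L 0 1 0)*hEi
  have haE : (L 0 0 0) * D * E = (-t*(1-s)) * E := by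
    linear_combination ((1-s-t^2/2)/2)*A1 + (t^2/4)*A4 - ((1-s)*t*E/4)*A2 - ((1-s)*t/4)*A3
  have ha : (L 0 0 0) * D = -t*(1-s) := mul_right_cancel₀ hE haE
  have hdE : (L 0 1 1) * D * E = (-t*(1+s)) * E := by
    linear_combination (t^2/4)*A1 + ((1+s-t^2/2)/2)*A4 - ((1+s)*t*E/4)*A2 - ((1+s)*t/4)*A3
  have hd : (L 0 1 1) * D = -t*(1+s) := mul_right_cancel₀ hE hdE
  have hb : (L 0 0 1) * D * E = 1 - s^2 := by
    linear_combination (D/2)*A2 - (t/2)*ha - (t/2)*hd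
  have hc : (L 0 1 0) * D = E*(1-s^2) := by
    linear_combination (D/2)*A3 - (t*E/2)*ha - (t*E/2)*hd
  -- L 1
  have g00 := congrFun (congrFun (hSLD 1) 0) 0
  have g01 := congrFun (congrFun (hSLD 1) 0) 1
  have g10 := congrFun (congrFun (hSLD 1) 1) 0
  have g11 := congrFun (congrFun (hSLD 1) 1) 1
  simp [drhoQ, rhoQ, Matrix.mul_apply, Matrix.vecMul, dotProduct, Fin.sum_univ_two,
    Complex.exp_neg, ← hEdef] at g00 g01 g10 g11
  have B1 : 2*(1+s)*(L 1 0 0)*E + t*(L 1 1 0) + t*E^2*(L 1 0 1) = 2*E := by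
    linear_combination 2*E*g00 - t*(L 1 1 0)*hEi
  have B2 : 2*(L 1 0 1)*E + t*(L 1 0 0 + L 1 1 1) = 0 := by
    linear_combination 2*E*g01 - t*(L 1 0 0 + L 1 1 1)*hEi
  have B3 : 2*(L 1 1 0) + t*E*(L 1 0 0 + L 1 1 1) = 0 := by
    linear_combination 2*g10
  have B4 : 2*(1-s)*(L 1 1 1)*E + t*E^2*(L 1 0 1) + t*(L 1 1 0) = -2*E := by
    linear_combination (-4*E)*g11 - t*(L 1 1 0)*hEi
  have haE1 : (L 1 0 0) * D * E = (1-s-t^2) * E := by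
    linear_combination ((1-s-t^2/2)/2)*B1 + (t^2/4)*B4 - ((1-s)*t*E/4)*B2 - ((1-s)*t/4)*B3
  have ha1 : (L 1 0 0) * D = 1-s-t^2 := mul_right_cancel₀ hE haE1
  have hdE1 : (L 1 1 1) * D * E = (-(1+s-t^2)) * E := by
    linear_combination (t^2/4)*B1 + ((1+s-t^2/2)/2)*B4 - ((1+s)*t*E/4)*B2 - ((1+s)*t/4)*B3
  have hd1 : (L 1 1 1) * D = -(1+s-t^2) := mul_right_cancel₀ hE hdE1
  have hb1 : (L 1 0 1) * D * E = t*s := by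
    linear_combination (D/2)*B2 - (t/2)*ha1 - (t/2)*hd1
  have hc1 : (L 1 1 0) * D = t*s*E := by
    linear_combination (D/2)*B3 - (t*E/2)*ha1 - (t*E/2)*hd1
  -- L 2
  have k00 := congrFun (congrFun (hSLD 2) 0) 0
  have k01 := congrFun (congrFun (hSLD 2) 0) 1
  have k10 := congrFun (congrFun (hSLD 2) 1) 0
  have k11 := congrFun (congrFun (hSLD 2) 1) 1
  simp [drhoQ, rhoQ, Matrix.mul_apply, Matrix.vecMul, dotProduct, Fin.sum_univ_two,
    Complex.exp_neg, ← hEdef] at k00 k01 k10 k11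
  have C1 : 2*(1+s)*(L 2 0 0)*E + t*(L 2 1 0) + t*E^2*(L 2 0 1) = 0 := by
    linear_combination 2*E*k00 - t*(L 2 1 0)*hEi
  have C2 : 2*(L 2 0 1)*E + t*(L 2 0 0 + L 2 1 1) = -2*Complex.I*t := by
    linear_combination (-4*E)*k01 - (t*(L 2 0 0 + L 2 1 1) + 2*Complex.I*t)*hEi
  have C3 : 2*(L 2 1 0) + t*E*(L 2 0 0 + L 2 1 1) = 2*Complex.I*t*E := by
    linear_combination (-4)*k10
  have C4 : 2*(1-s)*(L 2 1 1)*E + t*E^2*(L 2 0 1) + t*(L 2 1 0) = 0 := by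
    linear_combination 2*E*k11 - t*(L 2 1 0)*hEi
  have haE2 : (L 2 0 0) * D * E = 0 := by
    linear_combination ((1-s-t^2/2)/2)*C1 + (t^2/4)*C4 - ((1-s)*t*E/4)*C2 - ((1-s)*t/4)*C3
  have ha2 : (L 2 0 0) = 0 := by
    have h' : (L 2 0 0) * D = 0 := by
      rcases mul_eq_zero.mp haE2 with h'' | h''
      · exact h''
      · exact absurd h'' hE
    rcases mul_eq_zero.mp h' with h'' | h''
    · exact h''
    · exact absurd h'' hDc
  have hdE2 : (L 2 1 1) * D * E = 0 := by
    linear_combination (t^2/4)*C1 + ((1+s-t^2/2)/2)*C4 - ((1+s)*t*E/4)*C2 - ((1+s)*t/4)*C3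
  have hd2 : (L 2 1 1) = 0 := by
    have h' : (L 2 1 1) * D = 0 := by
      rcases mul_eq_zero.mp hdE2 with h'' | h''
      · exact h''
      · exact absurd h'' hE
    rcases mul_eq_zero.mp h' with h'' | h''
    · exact h''
    · exact absurd h'' hDc
  have hb2 : (L 2 0 1) * E = -Complex.I*t := by
    linear_combination (1/2)*C2 - (t/2)*ha2 - (t/2)*hd2
  have hc2 : (L 2 1 0) = Complex.I*t*E := by
    linear_combination (1/2)*C3 - (t*E/2)*ha2 - (t*E/2)*hd2
  -- closed forms
  have ha' : L 0 0 0 = -t*(1-s)/D := by rw [eq_div_iff hDc]; linear_combination ha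
  have hd' : L 0 1 1 = -t*(1+s)/D := by rw [eq_div_iff hDc]; linear_combination hd
  have hb' : L 0 0 1 = ((1-s^2)/D) * E⁻¹ := by
    rw [show ((1-s^2)/D) * E⁻¹ = (1-s^2)/(D*E) by field_simp; try ring, eq_div_iff (mul_ne_zero hDc hE)]
    linear_combination hb
  have hc' : L 0 1 0 = ((1-s^2)/D) * E := by
    rw [show ((1-s^2)/D) * E = E*(1-s^2)/D by field_simp; try ring, eq_div_iff hDc]
    linear_combination hc
  have ha1' : L 1 0 0 = (1-s-t^2)/D := by rw [eq_div_iff hDc]; linear_combination ha1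
  have hd1' : L 1 1 1 = -(1+s-t^2)/D := by rw [eq_div_iff hDc]; linear_combination hd1
  have hb1' : L 1 0 1 = (t*s/D) * E⁻¹ := by
    rw [show (t*s/D) * E⁻¹ = t*s/(D*E) by field_simp; try ring, eq_div_iff (mul_ne_zero hDc hE)]
    linear_combination hb1
  have hc1' : L 1 1 0 = (t*s/D) * E := by
    rw [show (t*s/D) * E = t*s*E/D by field_simp; try ring, eq_div_iff hDc]
    linear_combination hc1
  have hb2' : L 2 0 1 = (-Complex.I*t) * E⁻¹ := by
    rw [show (-Complex.I*t) * E⁻¹ = -Complex.I*t/E by field_simp; try ring, eq_div_iff hE]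
    linear_combination hb2
  have hc2' : L 2 1 0 = (Complex.I*t) * E := by linear_combination hc2
  -- E-free trace expansion
  have expand : ∀ (M N : Matrix (Fin 2) (Fin 2) ℂ),
      (rhoQ θ₁ θ₂ θ₃ * M * N).trace =
        ((1+s)/2 * M 0 0 + t*E⁻¹/2 * M 1 0) * N 0 0 +
        ((1+s)/2 * M 0 1 + t*E⁻¹/2 * M 1 1) * N 1 0 +
        (t*E/2 * M 0 0 + (1-s)/2 * M 1 0) * N 0 1 +
        (t*E/2 * M 0 1 + (1-s)/2 * M 1 1) * N 1 1 := by
    intro M N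
    simp [rhoQ, Matrix.trace, Matrix.diag, Matrix.mul_apply, Matrix.vecMul,
      dotProduct, Fin.sum_univ_two, Complex.exp_neg, ← hEdef]
    ring
  have key : ∀ (M N : Matrix (Fin 2) (Fin 2) ℂ) (βM γM βN γN : ℂ),
      M 0 1 = βM * E⁻¹ → M 1 0 = γM * E → N 0 1 = βN * E⁻¹ → N 1 0 = γN * E →
      (rhoQ θ₁ θ₂ θ₃ * M * N).trace =
        (1+s)/2 * (M 0 0 * N 0 0 + βM * γN) + (t/2) * (γM * N 0 0 + M 1 1 * γN)
        + (t/2) * (M 0 0 * βN + βM * N 1 1) + (1-s)/2 * (γM * βN + M 1 1 * N 1 1) := by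
    intro M N βM γM βN γN e1 e2 e3 e4
    rw [expand, e1, e2, e3, e4]
    linear_combination ((t/2)*(γM*N 0 0 + M 1 1*γN + M 0 0*βN + βM*N 1 1)
      + (1+s)/2*(βM*γN) + (1-s)/2*(γM*βN)) * hEi
  clear_value E t s D
  have hDc2 : (1:ℂ) - t^2 - s^2 ≠ 0 := by rw [← hDdef]; exact hDc
  have hXi : ((1:ℂ)-t^2-s^2) * ((1:ℂ)-t^2-s^2)⁻¹ = 1 := mul_inv_cancel₀ hDc2
  have htr00 : (rhoQ θ₁ θ₂ θ₃ * L 0 * L 0).trace = (1-s^2)/D := by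
    rw [key (L 0) (L 0) _ _ _ _ hb' hc' hb' hc', ha', hd']
    rw [hDdef]
    linear_combination ((1-s^2)*((1:ℂ)-t^2-s^2)⁻¹) * hXi
  have htr01 : (rhoQ θ₁ θ₂ θ₃ * L 0 * L 1).trace = t*s/D := by
    rw [key (L 0) (L 1) _ _ _ _ hb' hc' hb1' hc1', ha', hd', ha1', hd1']
    rw [hDdef]
    linear_combination (t*s*((1:ℂ)-t^2-s^2)⁻¹) * hXi
  have htr10 : (rhoQ θ₁ θ₂ θ₃ * L 1 * L 0).trace = t*s/D := by
    rw [key (L 1) (L 0) _ _ _ _ hb1' hc1' hb' hc', ha', hd', ha1', hd1']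
    rw [hDdef]
    linear_combination (t*s*((1:ℂ)-t^2-s^2)⁻¹) * hXi
  have htr11 : (rhoQ θ₁ θ₂ θ₃ * L 1 * L 1).trace = (1-t^2)/D := by
    rw [key (L 1) (L 1) _ _ _ _ hb1' hc1' hb1' hc1', ha1', hd1']
    rw [hDdef]
    linear_combination ((1-t^2)*((1:ℂ)-t^2-s^2)⁻¹) * hXi
  have htr02 : (rhoQ θ₁ θ₂ θ₃ * L 0 * L 2).trace = t*s*Complex.I := by
    rw [key (L 0) (L 2) _ _ _ _ hb' hc' hb2' hc2', ha', hd', ha2, hd2]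
    rw [hDdef]
    linear_combination (t*s*Complex.I) * hXi
  have htr20 : (rhoQ θ₁ θ₂ θ₃ * L 2 * L 0).trace = -(t*s*Complex.I) := by
    rw [key (L 2) (L 0) _ _ _ _ hb2' hc2' hb' hc', ha', hd', ha2, hd2]
    rw [hDdef]
    linear_combination (-(t*s*Complex.I)) * hXi
  have htr12 : (rhoQ θ₁ θ₂ θ₃ * L 1 * L 2).trace = -(t^2*Complex.I) := by
    rw [key (L 1) (L 2) _ _ _ _ hb1' hc1' hb2' hc2', ha1', hd1', ha2, hd2]
    rw [hDdef]
    linear_combination (-(t^2)*Complex.I) * hXi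
  have htr21 : (rhoQ θ₁ θ₂ θ₃ * L 2 * L 1).trace = t^2*Complex.I := by
    rw [key (L 2) (L 1) _ _ _ _ hb2' hc2' hb1' hc1', ha1', hd1', ha2, hd2]
    rw [hDdef]
    linear_combination (t^2*Complex.I) * hXi
  have htr22 : (rhoQ θ₁ θ₂ θ₃ * L 2 * L 2).trace = t^2 := by
    rw [key (L 2) (L 2) _ _ _ _ hb2' hc2' hb2' hc2', ha2, hd2]
    linear_combination (-(t^2)) * Complex.I_mul_I
  have hre : ∀ x y : ℝ, (((x:ℂ))/((y:ℂ))).re = x/y := by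
    intro x y; rw [← Complex.ofReal_div]; exact Complex.ofReal_re _
  have cast1 : ((1:ℂ)-(θ₂:ℂ)^2) = (((1-θ₂^2:ℝ)):ℂ) := by push_cast; ring
  have cast2 : ((1:ℂ)-(θ₁:ℂ)^2-(θ₂:ℂ)^2) = (((1-θ₁^2-θ₂^2:ℝ)):ℂ) := by push_cast; ring
  have cast3 : ((θ₁:ℂ)*(θ₂:ℂ)) = (((θ₁*θ₂:ℝ)):ℂ) := by push_cast; ring
  have cast4 : ((1:ℂ)-(θ₁:ℂ)^2) = (((1-θ₁^2:ℝ)):ℂ) := by push_cast; ring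
  have hGmat : G = !![(1-θ₂^2)/(1-θ₁^2-θ₂^2), θ₁*θ₂/(1-θ₁^2-θ₂^2), 0;
      θ₁*θ₂/(1-θ₁^2-θ₂^2), (1-θ₁^2)/(1-θ₁^2-θ₂^2), 0; 0, 0, θ₁^2] := by
    ext i j
    fin_cases i <;> fin_cases j
    · show G 0 0 = _
      rw [hGdef, htr00]; simp only [hDdef, htdef, hsdef]
      rw [cast1, cast2, hre]; simp
    · show G 0 1 = _
      rw [hGdef, htr01]; simp only [hDdef, htdef, hsdef]
      rw [cast3, cast2, hre]; simp
    · show G 0 2 = _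
      rw [hGdef, htr02]; simp only [htdef, hsdef]; simp [Complex.mul_re, ← Complex.ofReal_pow]
    · show G 1 0 = _
      rw [hGdef, htr10]; simp only [hDdef, htdef, hsdef]
      rw [cast3, cast2, hre]; simp
    · show G 1 1 = _
      rw [hGdef, htr11]; simp only [hDdef, htdef, hsdef]
      rw [cast2, cast4, hre]; simp
    · show G 1 2 = _
      rw [hGdef, htr12]; simp only [htdef, hsdef]; simp [Complex.mul_re, ← Complex.ofReal_pow]
    · show G 2 0 = _
      rw [hGdef, htr20]; simp only [htdef, hsdef]; simp [Complex.mul_re, ← Complex.ofReal_pow]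
    · show G 2 1 = _
      rw [hGdef, htr21]; simp only [htdef, hsdef]; simp [Complex.mul_re, ← Complex.ofReal_pow]
    · show G 2 2 = _
      rw [hGdef, htr22]; simp only [htdef]
      simp [← Complex.ofReal_pow]
  have hG02 : G 0 2 = 0 := by rw [hGmat]; simp
  have hG12 : G 1 2 = 0 := by rw [hGmat]; simp
  refine ⟨?_, ?_, hG02, hG12⟩
  · rw [hGmat]
    ext i j
    fin_cases i <;> fin_cases j <;>
      simp [Matrix.mul_apply, Fin.sum_univ_three, Matrix.one_apply] <;>
      (try field_simp) <;> (try ring)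
  · rw [hGmat]
    ext i j
    fin_cases i <;> fin_cases j <;>
      simp [Matrix.mul_apply, Fin.sum_univ_three, Matrix.one_apply] <;>
      (try field_simp) <;> (try ring)
end

section
/- For the qubit model with two parameters (θ₁, θ₂) and known phase θ₃, the inverse RLD Fisher information matrix is (1 − s²)·I₂ where s² = θ₁² + θ₂², computed via g̃_{ij} = (⟨∂_i s, ∂_j s⟩ + i⟨∂_i s × ∂_j s, s⟩)/(1 − s²), and it satisfies the matrix inequality G⁻¹ ≥ G̃⁻¹, i.e. (1−θ₁², −θ₁θ₂; −θ₁θ₂, 1−θ₂²) − (1−s²)I₂ is positive semidefinite. -/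
open Matrix

/-- Tangent vectors `∂₁ s, ∂₂ s` of the Bloch vector. -/
noncomputable def blochD (θ₃ : ℝ) : Fin 2 → (Fin 3 → ℝ) :=
  ![![Real.cos θ₃, Real.sin θ₃, 0], ![0, 0, 1]]

/-- The Bloch vector `s_θ`. -/
noncomputable def blochS (θ₁ θ₂ θ₃ : ℝ) : Fin 3 → ℝ :=
  ![θ₁ * Real.cos θ₃, θ₁ * Real.sin θ₃, θ₂]

/-- The RLD Fisher information matrix
`g̃_{ij} = (⟨∂_i s, ∂_j s⟩ + i⟨∂_i s × ∂_j s, s⟩)/(1 − s²)`. -/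
noncomputable def rldG (θ₁ θ₂ θ₃ : ℝ) : Matrix (Fin 2) (Fin 2) ℂ :=
  Matrix.of fun i j =>
    (((blochD θ₃ i ⬝ᵥ blochD θ₃ j : ℝ) : ℂ) +
      Complex.I * ((crossProduct (blochD θ₃ i) (blochD θ₃ j) ⬝ᵥ blochS θ₁ θ₂ θ₃ : ℝ) : ℂ)) /
      ((1 - (θ₁ ^ 2 + θ₂ ^ 2) : ℝ) : ℂ)

/-- The RLD Fisher matrix is a scalar multiple of the identity. -/
lemma rldG_eq (θ₁ θ₂ θ₃ : ℝ) :
    rldG θ₁ θ₂ θ₃ = (((1 - (θ₁ ^ 2 + θ₂ ^ 2) : ℝ) : ℂ))⁻¹ • 1 := by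
  have hc : Complex.cos θ₃ ^ 2 + Complex.sin θ₃ ^ 2 = 1 := Complex.cos_sq_add_sin_sq θ₃
  ext i j
  fin_cases i <;> fin_cases j <;>
    simp [rldG, blochD, blochS, crossProduct, dotProduct, Fin.sum_univ_succ,
      Matrix.one_apply, div_eq_mul_inv, Matrix.smul_apply] <;>
    first
      | (left; ring)
      | linear_combination ((1 : ℂ) - ((θ₁ : ℂ) ^ 2 + (θ₂ : ℂ) ^ 2))⁻¹ * hc

/-- For the two-parameter qubit model with known phase, the inverse
RLD Fisher information matrix is `(1 − s²)·I₂`, and `G⁻¹ ≥ G̃⁻¹`, i.e.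
`(1−θ₁², −θ₁θ₂; −θ₁θ₂, 1−θ₂²) − (1−s²)I₂` is positive semidefinite. -/
theorem stmt12 (θ₁ θ₂ θ₃ : ℝ) (h : θ₁ ^ 2 + θ₂ ^ 2 < 1) :
    rldG θ₁ θ₂ θ₃ * (((1 - (θ₁ ^ 2 + θ₂ ^ 2) : ℝ) : ℂ) •
      (1 : Matrix (Fin 2) (Fin 2) ℂ)) = 1 ∧
    ((!![1 - θ₁ ^ 2, -(θ₁ * θ₂); -(θ₁ * θ₂), 1 - θ₂ ^ 2] :
        Matrix (Fin 2) (Fin 2) ℝ) -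
      (1 - (θ₁ ^ 2 + θ₂ ^ 2)) • (1 : Matrix (Fin 2) (Fin 2) ℝ)).PosSemidef := by
  have hne : ((1 - (θ₁ ^ 2 + θ₂ ^ 2) : ℝ) : ℂ) ≠ 0 := by
    simp only [ne_eq, Complex.ofReal_eq_zero]
    nlinarith
  constructor
  · rw [rldG_eq, Matrix.mul_smul, Matrix.smul_mul, Matrix.one_mul, smul_smul,
      mul_inv_cancel₀ hne, one_smul]
  · have hM : ((!![1 - θ₁ ^ 2, -(θ₁ * θ₂); -(θ₁ * θ₂), 1 - θ₂ ^ 2] :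
        Matrix (Fin 2) (Fin 2) ℝ) -
      (1 - (θ₁ ^ 2 + θ₂ ^ 2)) • (1 : Matrix (Fin 2) (Fin 2) ℝ)) =
      !![θ₂ ^ 2, -(θ₁ * θ₂); -(θ₁ * θ₂), θ₁ ^ 2] := by
      ext i j
      fin_cases i <;> fin_cases j <;>
        simp [Matrix.smul_apply, Matrix.one_apply] <;> ring
    rw [hM]
    rw [Matrix.posSemidef_iff_dotProduct_mulVec]
    constructor
    · ext i j
      fin_cases i <;> fin_cases j <;> simp [Matrix.conjTranspose_apply]
    · intro x
      have : star x ⬝ᵥ (!![θ₂ ^ 2, -(θ₁ * θ₂); -(θ₁ * θ₂), θ₁ ^ 2]).mulVec x =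
          (θ₂ * x 0 - θ₁ * x 1) ^ 2 := by
        simp [dotProduct, Matrix.mulVec, Fin.sum_univ_succ]
        ring
      rw [this]
      positivity
end

section
/- For the Holevo bound with block weight, the region condition holds: for fixed 2×2 positive definite G⁻¹, positive semidefinite B = G⁻¹ − G̃⁻¹, and g³³, v₃₃ > 0 with v₃₃ > g³³ and γ = v₃₃/(v₃₃−g³³), a 2×2 symmetric matrix V₂ satisfies Tr(W V₂) + w₃ v₃₃ ≥ Tr(W G⁻¹) + w₃ g³³ + 2√(w₃ g³³ Tr(W B)) for all W > 0, w₃ > 0, if and only if V₂ ≥ γ G⁻¹ − (γ−1) G̃⁻¹ = G⁻¹ + (γ−1)B. -/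
open Matrix

lemma psd_trace_nonneg {n : Type*} [Fintype n] [DecidableEq n] {A : Matrix n n ℝ}
    (hA : A.PosSemidef) : 0 ≤ A.trace := by
  rw [Matrix.trace]
  refine Finset.sum_nonneg fun i _ => ?_
  have := hA.dotProduct_mulVec_nonneg (Pi.single i 1)
  simpa [Matrix.mulVec_single, dotProduct, Pi.single_apply] using this

lemma psd_trace_mul_nonneg {n : Type*} [Fintype n] [DecidableEq n] {A B : Matrix n n ℝ}
    (hA : A.PosSemidef) (hB : B.PosSemidef) : 0 ≤ (A * B).trace := by
  obtain ⟨C, rfl⟩ : ∃ C : Matrix n n ℝ, B = Cᴴ * C := by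
    open scoped MatrixOrder in exact CStarAlgebra.nonneg_iff_eq_star_mul_self.mp hB.nonneg
  have h : (A * (Cᴴ * C)).trace = (C * A * Cᴴ).trace := by
    rw [trace_mul_comm, Matrix.mul_assoc, trace_mul_comm, Matrix.mul_assoc]
  rw [h]
  exact psd_trace_nonneg (hA.mul_mul_conjTranspose_same C)

lemma vecMulVec_psd {n : Type*} [Fintype n] (x : n → ℝ) : (vecMulVec x x).PosSemidef := by
  refine posSemidef_iff_dotProduct_mulVec.mpr ⟨?_, ?_⟩
  · ext i j
    simp [vecMulVec_apply, mul_comm]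
  · intro z
    have h : star z ⬝ᵥ (vecMulVec x x *ᵥ z) = (x ⬝ᵥ z) ^ 2 := by
      simp only [dotProduct, Matrix.mulVec, vecMulVec_apply, sq, Finset.sum_mul_sum,
        dotProduct, star_trivial, Pi.star_apply, star_trivial]
      rw [Finset.sum_congr rfl fun i _ => rfl]
      congr 1
      ext i
      rw [Finset.mul_sum]
      congr 1; ext j; ring
    rw [h]; positivity

lemma trace_vecMulVec_mul {n : Type*} [Fintype n] (x : n → ℝ) (M : Matrix n n ℝ) :
    (vecMulVec x x * M).trace = x ⬝ᵥ (M *ᵥ x) := by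
  simp only [Matrix.trace, Matrix.diag, Matrix.mul_apply, vecMulVec_apply, dotProduct,
    Matrix.mulVec, Finset.mul_sum]
  rw [Finset.sum_comm]
  congr 1; ext i; congr 1; ext j; ring

/-- For `G⁻¹` positive definite, `B = G⁻¹ − G̃⁻¹` positive
semidefinite, `v₃₃ > g³³ > 0` and `γ = v₃₃/(v₃₃−g³³)`, a symmetric `V₂` satisfies
`Tr(W V₂) + w₃ v₃₃ ≥ Tr(W G⁻¹) + w₃ g³³ + 2√(w₃ g³³ Tr(W B))` for all `W > 0`,
`w₃ > 0`, iff `V₂ ≥ G⁻¹ + (γ−1)B`. -/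
theorem stmt17 (Ginv B : Matrix (Fin 2) (Fin 2) ℝ)
    (hG : Ginv.PosDef) (hB : B.PosSemidef)
    (g₃₃ v₃₃ : ℝ) (hg : 0 < g₃₃) (hvg : g₃₃ < v₃₃)
    (V₂ : Matrix (Fin 2) (Fin 2) ℝ) (hV₂ : V₂.IsHermitian) :
    (∀ W : Matrix (Fin 2) (Fin 2) ℝ, W.PosDef → ∀ w₃ : ℝ, 0 < w₃ →
      (W * Ginv).trace + w₃ * g₃₃ + 2 * Real.sqrt (w₃ * g₃₃ * (W * B).trace) ≤
        (W * V₂).trace + w₃ * v₃₃) ↔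
    (V₂ - (Ginv + (v₃₃ / (v₃₃ - g₃₃) - 1) • B)).PosSemidef := by
  set d : ℝ := v₃₃ - g₃₃ with hd_def
  have hd : 0 < d := by simp [hd_def]; linarith
  set c : ℝ := v₃₃ / (v₃₃ - g₃₃) - 1 with hc_def
  have hc : c = g₃₃ / d := by
    rw [hc_def, hd_def]
    rw [div_sub_one (by linarith)]; ring
  have hc0 : 0 < c := by rw [hc]; positivity
  set M : Matrix (Fin 2) (Fin 2) ℝ := V₂ - (Ginv + c • B) with hM_def
  -- trace splitting identity
  have hsplit : ∀ W : Matrix (Fin 2) (Fin 2) ℝ,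
      (W * V₂).trace = (W * M).trace + (W * Ginv).trace + c * (W * B).trace := by
    intro W
    have h1 : W * M = W * V₂ - (W * Ginv + c • (W * B)) := by
      rw [hM_def, Matrix.mul_sub, Matrix.mul_add, Matrix.mul_smul]
    rw [h1, trace_sub, trace_add, trace_smul]
    simp
    ring
  constructor
  · intro h
    -- first: trace nonnegativity against all PosDef W
    have key : ∀ W : Matrix (Fin 2) (Fin 2) ℝ, W.PosDef → 0 ≤ (W * M).trace := by
      intro W hW
      set t : ℝ := (W * B).trace with ht_def
      have ht : 0 ≤ t := psd_trace_mul_nonneg hW.posSemidef hB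
      set s : ℝ := (W * M).trace with hs_def
      have key2 : ∀ w₃ : ℝ, 0 < w₃ →
          2 * Real.sqrt (w₃ * g₃₃ * t) ≤ s + c * t + w₃ * d := by
        intro w₃ hw
        have := h W hW w₃ hw
        rw [hsplit W] at this
        rw [hd_def]
        linarith
      rcases eq_or_lt_of_le ht with ht0 | htpos
      · -- t = 0
        have key3 : ∀ w₃ : ℝ, 0 < w₃ → 0 ≤ s + w₃ * d := by
          intro w₃ hw
          have := key2 w₃ hw
          rw [← ht0] at this
          simpa using this
        by_contra hs
        push_neg at hs
        have hw : 0 < -s / (2 * d) := div_pos (by linarith) (by linarith)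
        have h2 : -s / (2 * d) * d = -s / 2 := by
          field_simp
        have := key3 _ hw
        rw [h2] at this
        linarith
      · -- t > 0
        have hw : 0 < g₃₃ * t / (d * d) := by positivity
        have := key2 _ hw
        have hsq : g₃₃ * t / (d * d) * g₃₃ * t = (g₃₃ * t / d) ^ 2 := by
          field_simp
        rw [hsq, Real.sqrt_sq (by positivity)] at this
        have hne : d ≠ 0 := ne_of_gt hd
        rw [hc] at this
        have e1 : g₃₃ * t / (d * d) * d = g₃₃ * t / d := by field_simp
        have e2 : g₃₃ / d * t = g₃₃ * t / d := by ring
        rw [e1, e2] at this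
        linarith
    -- now conclude PosSemidef
    have hMherm : M.IsHermitian := by
      rw [hM_def]
      have hcB : (c • B).IsHermitian := by
        unfold Matrix.IsHermitian
        rw [Matrix.conjTranspose_smul, hB.isHermitian.eq]
        simp
      exact hV₂.sub ((hG.isHermitian).add hcB)
    refine posSemidef_iff_dotProduct_mulVec.mpr ⟨hMherm, fun x => ?_⟩
    have hq : ∀ ε : ℝ, 0 < ε → 0 ≤ x ⬝ᵥ (M *ᵥ x) + ε * M.trace := by
      intro ε hε
      have hWpd : (vecMulVec x x + Matrix.diagonal (fun _ : Fin 2 => ε)).PosDef :=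
        Matrix.PosDef.posSemidef_add (vecMulVec_psd x) (Matrix.posDef_diagonal_iff.mpr fun _ => hε)
      have := key _ hWpd
      rw [Matrix.add_mul, trace_add, trace_vecMulVec_mul] at this
      have hdm : (Matrix.diagonal (fun _ : Fin 2 => ε) * M).trace = ε * M.trace := by
        simp [Matrix.trace, Matrix.diag, Matrix.diagonal_mul, Finset.mul_sum]
        ring
      rw [hdm] at this
      exact this
    have hfinal : 0 ≤ x ⬝ᵥ (M *ᵥ x) := by
      by_contra hneg
      push_neg at hneg
      rcases le_or_gt M.trace 0 with htr | htr
      · have := hq 1 one_pos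
        nlinarith
      · have hε : 0 < -(x ⬝ᵥ (M *ᵥ x)) / (2 * M.trace) := div_pos (by linarith) (by linarith)
        have hne : M.trace ≠ 0 := ne_of_gt htr
        have h2 : -(x ⬝ᵥ (M *ᵥ x)) / (2 * M.trace) * M.trace = -(x ⬝ᵥ (M *ᵥ x)) / 2 := by
          field_simp
        have := hq _ hε
        rw [h2] at this
        linarith
    simpa using hfinal
  · intro hM W hW w₃ hw
    have hs : 0 ≤ (W * M).trace := psd_trace_mul_nonneg hW.posSemidef hM
    have ht : 0 ≤ (W * B).trace := psd_trace_mul_nonneg hW.posSemidef hB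
    set t : ℝ := (W * B).trace
    set s : ℝ := (W * M).trace
    have ha : (0:ℝ) ≤ c * t := by positivity
    have hb : (0:ℝ) ≤ w₃ * d := by positivity
    have hprod : w₃ * g₃₃ * t = (c * t) * (w₃ * d) := by
      rw [hc]; field_simp
    have hamgm : 2 * Real.sqrt (w₃ * g₃₃ * t) ≤ c * t + w₃ * d := by
      rw [hprod, Real.sqrt_mul ha]
      nlinarith [sq_nonneg (Real.sqrt (c * t) - Real.sqrt (w₃ * d)),
        Real.sq_sqrt ha, Real.sq_sqrt hb, Real.sqrt_nonneg (c * t),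
        Real.sqrt_nonneg (w₃ * d)]
    rw [hsplit W]
    rw [hd_def] at hamgm
    linarith
end
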